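/- In the meta-rotation poset, if P and P' are closed subsets with P ⊆ P', then the maximum weight stable matching generated by P dominates (is weakly boy-preferred to) the one generated by P'. In particular, the closed subset {S} generates the boy-optimal matching and the closed subset consisting of all meta-rotations except T generates the girl-optimal matching within the sublattice of maximum weight stable matchings. -/

import Mathlib

/-- `rB b g` is the rank boy `b` gives girl `g` (smaller = more preferred), and
`rG g b` the rank girl `g` gives boy `b`.  A matching (bijection) `M` is stable if
no pair `(b, g)` prefer each other to their partners. -/
def StableM {B G : Type*} (rB : B → G → ℕ) (rG : G → B → ℕ) (M : B ≃ G) : Prop :=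
  ∀ (b : B) (g : G), ¬ (rB b g < rB b (M b) ∧ rG g b < rG g (M.symm g))

/-- The total weight of a matching. -/
def matchWeight {B G : Type*} [Fintype B] (w : B → G → ℚ) (M : B ≃ G) : ℚ :=
  ∑ b, w b (M b)

/-- A maximum weight stable matching. -/
def MaxWtStable {B G : Type*} [Fintype B] (rB : B → G → ℕ) (rG : G → B → ℕ)
    (w : B → G → ℚ) (M : B ≃ G) : Prop :=
  StableM rB rG M ∧ ∀ N : B ≃ G, StableM rB rG N → matchWeight w N ≤ matchWeight w M

/-- A rotation: a cyclic sequence of `r ≥ 2` distinct pairs `(b_i, g_i)`.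
Indices live in `ZMod r` so that `i + 1` wraps around. -/
structure Rotation (B G : Type*) where
  r : ℕ
  two_le : 2 ≤ r
  bs : ZMod r → B
  gs : ZMod r → G
  inj_bs : Function.Injective bs
  inj_gs : Function.Injective gs

/-- `ρ` is exposed in `M`: each `b_i` is matched to `g_i`, and `g_{i+1} = s_M(b_i)` is
the first girl on `b_i`'s list preferring `b_i` to her `M`-partner. -/
def Exposed {B G : Type*} (rB : B → G → ℕ) (rG : G → B → ℕ) (M : B ≃ G)
    (ρ : Rotation B G) : Prop :=
  (∀ i, M (ρ.bs i) = ρ.gs i) ∧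
    (∀ i, rG (ρ.gs (i + 1)) (ρ.bs i) < rG (ρ.gs (i + 1)) (M.symm (ρ.gs (i + 1)))) ∧
    (∀ i, ∀ g : G, rB (ρ.bs i) g < rB (ρ.bs i) (ρ.gs (i + 1)) →
      ¬ (rG g (ρ.bs i) < rG g (M.symm g)))

/-- `M'` results from `M` by eliminating the rotation `ρ` (exposed in `M`):
each `b_i` moves from `g_i` to `g_{i+1}`, everyone else keeps their partner. -/
def Eliminates {B G : Type*} (rB : B → G → ℕ) (rG : G → B → ℕ)
    (M : B ≃ G) (ρ : Rotation B G) (M' : B ≃ G) : Prop :=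
  Exposed rB rG M ρ ∧ (∀ i, M' (ρ.bs i) = ρ.gs (i + 1)) ∧
    ∀ b : B, (∀ i, b ≠ ρ.bs i) → M' b = M b

/-- `ElimChain rB rG M L M'`: the list `L` of rotations can be eliminated one after
another starting from `M` and ending at `M'`. -/
def ElimChain {B G : Type*} (rB : B → G → ℕ) (rG : G → B → ℕ) :
    (B ≃ G) → List (Rotation B G) → (B ≃ G) → Prop
  | M, [], M' => M = M'
  | M, ρ :: L, M' => ∃ N : B ≃ G, Eliminates rB rG M ρ N ∧ ElimChain rB rG N L M'

/-- The boy-optimal stable matching. -/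
def BoyOptimal {B G : Type*} (rB : B → G → ℕ) (rG : G → B → ℕ) (M₀ : B ≃ G) : Prop :=
  StableM rB rG M₀ ∧ ∀ M : B ≃ G, StableM rB rG M → ∀ b, rB b (M₀ b) ≤ rB b (M b)

/-- The girl-optimal stable matching. -/
def GirlOptimal {B G : Type*} (rB : B → G → ℕ) (rG : G → B → ℕ) (Mz : B ≃ G) : Prop :=
  StableM rB rG Mz ∧ ∀ M : B ≃ G, StableM rB rG M → ∀ g, rG g (Mz.symm g) ≤ rG g (M.symm g)

/-- `ρ` is a rotation of the instance: it is exposed in some stable matching. -/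
def IsRotation {B G : Type*} (rB : B → G → ℕ) (rG : G → B → ℕ) (ρ : Rotation B G) : Prop :=
  ∃ M : B ≃ G, StableM rB rG M ∧ Exposed rB rG M ρ

/-- The set of pairs of a rotation (rotations are identified up to cyclic shift by
having equal pair sets). -/
def rotPairs {B G : Type*} (ρ : Rotation B G) : Set (B × G) :=
  {p | ∃ i, p = (ρ.bs i, ρ.gs i)}

/-- `ρ` moves `b` to `g`: after eliminating `ρ`, `b` is matched to `g`. -/
def MovesTo {B G : Type*} (ρ : Rotation B G) (b : B) (g : G) : Prop :=
  ∃ i, ρ.bs i = b ∧ ρ.gs (i + 1) = g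

/-- `ρ` moves `b` from `g`: before eliminating `ρ`, `b` is matched to `g`. -/
def MovesFrom {B G : Type*} (ρ : Rotation B G) (b : B) (g : G) : Prop :=
  ∃ i, ρ.bs i = b ∧ ρ.gs i = g

/-- `ρ'` precedes `ρ` in the rotation poset: `ρ'` is eliminated (up to cyclic shift)
in every sequence of eliminations from the boy-optimal matching `M₀` to a stable
matching in which `ρ` is exposed. -/
def Precedes {B G : Type*} (rB : B → G → ℕ) (rG : G → B → ℕ)
    (ρ' ρ : Rotation B G) : Prop :=
  ∀ (M₀ : B ≃ G) (L : List (Rotation B G)) (M : B ≃ G),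
    BoyOptimal rB rG M₀ → ElimChain rB rG M₀ L M → Exposed rB rG M ρ →
      ∃ ρ'' ∈ L, rotPairs ρ'' = rotPairs ρ'

/-- Vertices of the DAG `G` built from the rotation poset: a source, a sink, and one
vertex per rotation (indexed by `ι`). -/
inductive Vtx (ι : Type*) where
  | src : Vtx ι
  | snk : Vtx ι
  | node : ι → Vtx ι
deriving DecidableEq

instance {ι : Type*} [Fintype ι] [DecidableEq ι] : Fintype (Vtx ι) :=
  Fintype.ofSurjective
    (fun x : Option (Option ι) =>
      match x with
      | none => Vtx.src
      | some none => Vtx.snk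
      | some (some i) => Vtx.node i)
    (by rintro (_ | _ | i) <;> [exact ⟨none, rfl⟩; exact ⟨some none, rfl⟩;
          exact ⟨some (some i), rfl⟩])

/-- `M` is the stable matching generated by the (closed) set `C` of rotation indices:
it is obtained from `M₀` by eliminating the rotations of `C` in some (topological)
order. -/
def GeneratedBy {B G ι : Type*} (rB : B → G → ℕ) (rG : G → B → ℕ) (M₀ : B ≃ G)
    (rot : ι → Rotation B G) (C : Set ι) (M : B ≃ G) : Prop :=
  ∃ L : List ι, (∀ i, i ∈ L ↔ i ∈ C) ∧ ElimChain rB rG M₀ (L.map rot) M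

/-- The defining conditions on the path `P_{bg}` associated to a pair `bg` occurring in
some but not all stable matchings (`M₀` boy-optimal, `Mz` girl-optimal):
from the source to the rotation moving `b` from `g`, or from the rotation moving `b`
to `g` to the sink, or between the two rotations, according to whether `bg ∈ M₀`
and/or `bg ∈ Mz`. -/
def PathSpec {B G ι : Type*} (M₀ Mz : B ≃ G) (rot : ι → Rotation B G)
    (b : B) (g : G) (P : List (Vtx ι)) : Prop :=
  (M₀ b = g ∧ Mz b ≠ g ∧ ∃ i, MovesFrom (rot i) b g ∧
      P.head? = some Vtx.src ∧ P.getLast? = some (Vtx.node i)) ∨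
  (M₀ b ≠ g ∧ Mz b = g ∧ ∃ i, MovesTo (rot i) b g ∧
      P.head? = some (Vtx.node i) ∧ P.getLast? = some Vtx.snk) ∨
  (M₀ b ≠ g ∧ Mz b ≠ g ∧ ∃ i j, MovesTo (rot i) b g ∧ MovesFrom (rot j) b g ∧
      P.head? = some (Vtx.node i) ∧ P.getLast? = some (Vtx.node j))

/-- The cut with source side `S` cuts the path `P`: some edge of `P` crosses from `S`
to its complement. -/
def CutsPath {W : Type*} (S : Set W) (P : List W) : Prop :=
  ∃ q ∈ P.zip P.tail, q.1 ∈ S ∧ q.2 ∉ S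

/-- A closed subset of the meta-rotation poset. -/
def MetaClosed {κ : Type*} (MetaPrec : κ → κ → Prop) (P : Set κ) : Prop :=
  ∀ k ∈ P, ∀ k', MetaPrec k' k → k' ∈ P

/-- The set of rotations contained in the meta-rotations of `P`. -/
def metaRotSet {ι κ : Type*} (metaOf : κ → Set ι) (P : Set κ) : Set ι :=
  {i | ∃ k ∈ P, i ∈ metaOf k}

/-- `M` dominates `M'`: every boy weakly prefers his `M`-partner. -/
def Dominates {B G : Type*} (rB : B → G → ℕ) (M M' : B ≃ G) : Prop :=
  ∀ b, rB b (M b) ≤ rB b (M' b)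


section MetaRotLemmas

variable {B G : Type*} {rB : B → G → ℕ} {rG : G → B → ℕ}

lemma exposed_step_lt (hrB : ∀ b, Function.Injective (rB b))
    {M : B ≃ G} {ρ : Rotation B G} (hM : StableM rB rG M)
    (hex : Exposed rB rG M ρ) (i : ZMod ρ.r) :
    rB (ρ.bs i) (ρ.gs i) < rB (ρ.bs i) (ρ.gs (i + 1)) := by
  obtain ⟨h1, h2, _⟩ := hex
  rcases lt_trichotomy (rB (ρ.bs i) (ρ.gs i)) (rB (ρ.bs i) (ρ.gs (i + 1))) with h | h | h
  · exact h
  · exfalso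
    have hgg : ρ.gs i = ρ.gs (i + 1) := hrB (ρ.bs i) h
    have hii : i = i + 1 := ρ.inj_gs hgg
    haveI : Fact (1 < ρ.r) := ⟨ρ.two_le⟩
    exact one_ne_zero (left_eq_add.mp hii)
  · exact absurd ⟨by rwa [h1 i], h2 i⟩ (hM (ρ.bs i) (ρ.gs (i + 1)))

lemma elim_girl_le {M M' : B ≃ G} {ρ : Rotation B G}
    (hel : Eliminates rB rG M ρ M') (g : G) :
    rG g (M'.symm g) ≤ rG g (M.symm g) := by
  obtain ⟨⟨h1, h2, _⟩, h4, h5⟩ := hel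
  by_cases hg : ∃ i, ρ.gs i = g
  · obtain ⟨i, rfl⟩ := hg
    have hM' : M' (ρ.bs (i - 1)) = ρ.gs i := by
      rw [h4 (i - 1), sub_add_cancel]
    have hsymm : M'.symm (ρ.gs i) = ρ.bs (i - 1) := by
      rw [← hM', Equiv.symm_apply_apply]
    have h2' := (h2 (i - 1)).le
    rw [sub_add_cancel] at h2'
    rw [hsymm]; exact h2'
  · push_neg at hg
    have hb : ∀ i, M.symm g ≠ ρ.bs i := by
      intro i h
      exact hg i (by rw [← h1 i, ← h, Equiv.apply_symm_apply])
    have hMg : M' (M.symm g) = g := by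
      rw [h5 _ hb, Equiv.apply_symm_apply]
    have hsg : M'.symm g = M.symm g := (Equiv.symm_apply_eq M').mpr hMg.symm
    rw [hsg]

lemma elim_stable {M M' : B ≃ G} {ρ : Rotation B G}
    (hM : StableM rB rG M) (hel : Eliminates rB rG M ρ M') :
    StableM rB rG M' := by
  intro b g hbg
  obtain ⟨hbg, hgb⟩ := hbg
  have hgirl : rG g (M'.symm g) ≤ rG g (M.symm g) := elim_girl_le hel g
  obtain ⟨⟨h1, h2, h3⟩, h4, h5⟩ := hel
  by_cases hb : ∃ i, ρ.bs i = b
  · obtain ⟨i, rfl⟩ := hb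
    rw [h4 i] at hbg
    exact h3 i g hbg (lt_of_lt_of_le hgb hgirl)
  · push_neg at hb
    rw [h5 b (fun i h => hb i h.symm)] at hbg
    exact hM b g ⟨hbg, lt_of_lt_of_le hgb hgirl⟩

lemma elim_boy_le (hrB : ∀ b, Function.Injective (rB b)) {M M' : B ≃ G} {ρ : Rotation B G}
    (hM : StableM rB rG M) (hel : Eliminates rB rG M ρ M') (b : B) :
    rB b (M b) ≤ rB b (M' b) := by
  obtain ⟨hex, h4, h5⟩ := hel
  by_cases hb : ∃ i, ρ.bs i = b
  · obtain ⟨i, rfl⟩ := hb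
    rw [h4 i, hex.1 i]
    exact (exposed_step_lt hrB hM hex i).le
  · push_neg at hb
    rw [h5 b (fun i h => hb i h.symm)]

lemma chain_stable : ∀ (L : List (Rotation B G)) (M N : B ≃ G),
    StableM rB rG M → ElimChain rB rG M L N → StableM rB rG N := by
  intro L
  induction L with
  | nil => intro M N hM h; exact h ▸ hM
  | cons ρ rest ih =>
    intro M N hM h
    obtain ⟨M1, hel, hchain⟩ := h
    exact ih M1 N (elim_stable hM hel) hchain

lemma chain_boy_le (hrB : ∀ b, Function.Injective (rB b)) :
    ∀ (L : List (Rotation B G)) (M N : B ≃ G),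
    StableM rB rG M → ElimChain rB rG M L N → ∀ b, rB b (M b) ≤ rB b (N b) := by
  intro L
  induction L with
  | nil => intro M N _ h b; rw [show M = N from h]
  | cons ρ rest ih =>
    intro M N hM h b
    obtain ⟨M1, hel, hchain⟩ := h
    exact le_trans (elim_boy_le hrB hM hel b)
      (ih M1 N (elim_stable hM hel) hchain b)

lemma chain_from_rank (hrB : ∀ b, Function.Injective (rB b)) :
    ∀ (L : List (Rotation B G)) (M N : B ≃ G),
    StableM rB rG M → ElimChain rB rG M L N →
    ∀ ρ ∈ L, ∀ i, rB (ρ.bs i) (M (ρ.bs i)) ≤ rB (ρ.bs i) (ρ.gs i) := by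
  intro L
  induction L with
  | nil => intro M N _ _ ρ hρ; exact absurd hρ List.not_mem_nil
  | cons π rest ih =>
    intro M N hM h ρ hρ i
    obtain ⟨M1, hel, hchain⟩ := h
    rcases List.mem_cons.mp hρ with rfl | hρ
    · rw [hel.1.1 i]
    · exact le_trans (elim_boy_le hrB hM hel _)
        (ih M1 N (elim_stable hM hel) hchain ρ hρ i)

lemma chain_extract (hrB : ∀ b, Function.Injective (rB b)) :
    ∀ (L' : List (Rotation B G)) (M N' : B ≃ G),
    StableM rB rG M → ElimChain rB rG M L' N' →
    ∀ ρ ∈ L', ∀ i, ρ.gs i = M (ρ.bs i) →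
    ∃ (M'' : B ≃ G) (L'' : List (Rotation B G)), StableM rB rG M'' ∧
      ElimChain rB rG M'' L'' N' ∧ M'' (ρ.bs i) = ρ.gs (i + 1) ∧
      ∀ τ ∈ L', (∃ j, τ.bs j = ρ.bs i ∧
        rB (ρ.bs i) (M (ρ.bs i)) < rB (ρ.bs i) (τ.gs j)) → τ ∈ L'' := by
  intro L'
  induction L' with
  | nil => intro M N' _ _ ρ hρ; exact absurd hρ List.not_mem_nil
  | cons π rest ih =>
    intro M N' hM h ρ hρ i hgi
    obtain ⟨M1, hel, hchain⟩ := h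
    set b := ρ.bs i with hbdef
    have hM1st : StableM rB rG M1 := elim_stable hM hel
    by_cases hπb : ∃ j, π.bs j = b
    · obtain ⟨j, hj⟩ := hπb
      have hMb : π.gs j = M b := by rw [← hj, hel.1.1 j]
      have hM1b : M1 b = π.gs (j + 1) := by rw [← hj, hel.2.1 j]
      have hstrict : rB b (M b) < rB b (M1 b) := by
        rw [hM1b, ← hMb]
        have := exposed_step_lt hrB hM hel.1 j
        rwa [hj] at this
      have hρπ : ρ = π := by
        rcases List.mem_cons.mp hρ with rfl | hρr
        · rfl
        · exfalso
          have := chain_from_rank hrB rest M1 N' hM1st hchain ρ hρr i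
          rw [← hbdef, hgi] at this
          exact absurd (lt_of_lt_of_le hstrict this) (lt_irrefl _)
      subst hρπ
      have hij : j = i := ρ.inj_bs (hj.trans hbdef)
      subst hij
      refine ⟨M1, rest, hM1st, hchain, by rw [← hj]; exact hel.2.1 j, ?_⟩
      intro τ hτ hτb
      rcases List.mem_cons.mp hτ with rfl | hτr
      · exfalso
        obtain ⟨j', hj', hlt⟩ := hτb
        have : j' = j := τ.inj_bs (hj'.trans hbdef)
        subst this
        rw [hgi] at hlt
        exact absurd hlt (lt_irrefl _)
      · exact hτr
    · push_neg at hπb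
      have hM1b : M1 b = M b := hel.2.2 b (fun j hh => hπb j hh.symm)
      have hρr : ρ ∈ rest := by
        rcases List.mem_cons.mp hρ with rfl | hρr
        · exact absurd rfl (hπb i)
        · exact hρr
      obtain ⟨M'', L'', hst'', hch'', hb'', hmem''⟩ :=
        ih M1 N' hM1st hchain ρ hρr i (by rw [hgi, ← hbdef, hM1b])
      refine ⟨M'', L'', hst'', hch'', hb'', ?_⟩
      intro τ hτ hτb
      rcases List.mem_cons.mp hτ with rfl | hτr
      · obtain ⟨j', hj', _⟩ := hτb
        exact absurd hj' (hπb j')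
      · obtain ⟨j', hj', hlt⟩ := hτb
        exact hmem'' τ hτr ⟨j', hj', by rwa [← hbdef, hM1b, hbdef]⟩

lemma chain_mono (hrB : ∀ b, Function.Injective (rB b)) :
    ∀ (L : List (Rotation B G)) (M Ma N N' : B ≃ G) (L' : List (Rotation B G)) (b : B),
    StableM rB rG M → StableM rB rG Ma → M b = Ma b →
    ElimChain rB rG M L N → ElimChain rB rG Ma L' N' →
    (∀ τ ∈ L, (∃ j, τ.bs j = b ∧ rB b (M b) ≤ rB b (τ.gs j)) → τ ∈ L') →
    rB b (N b) ≤ rB b (N' b) := by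
  intro L
  induction L with
  | nil =>
    intro M Ma N N' L' b hM hMa hMb h h' _
    rw [show M = N from h] at hMb
    rw [hMb]
    exact chain_boy_le hrB L' Ma N' hMa h' b
  | cons π rest ih =>
    intro M Ma N N' L' b hM hMa hMb h h' hsub
    obtain ⟨M1, hel, hchain⟩ := h
    have hM1st : StableM rB rG M1 := elim_stable hM hel
    by_cases hπb : ∃ j, π.bs j = b
    · obtain ⟨j, hj⟩ := hπb
      have hMb' : π.gs j = M b := by rw [← hj, hel.1.1 j]
      have hM1b : M1 b = π.gs (j + 1) := by rw [← hj, hel.2.1 j]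
      have hstrict : rB b (M b) < rB b (M1 b) := by
        rw [hM1b, ← hMb']
        have := exposed_step_lt hrB hM hel.1 j
        rwa [hj] at this
      have hπL' : π ∈ L' :=
        hsub π List.mem_cons_self ⟨j, hj, by rw [hMb']⟩
      obtain ⟨M'', L'', hst'', hch'', hb'', hmem''⟩ :=
        chain_extract hrB L' Ma N' hMa h' π hπL' j (by rw [hMb', hMb, hj])
      rw [hj] at hb''
      apply ih M1 M'' N N' L'' b hM1st hst'' (by rw [hM1b, hb'']) hchain hch''
      intro τ hτ hτb
      obtain ⟨j', hj', hle⟩ := hτb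
      have hlt : rB b (M b) < rB b (τ.gs j') := lt_of_lt_of_le hstrict hle
      have hτL' : τ ∈ L' := hsub τ (List.mem_cons_of_mem π hτ) ⟨j', hj', hlt.le⟩
      apply hmem'' τ hτL'
      refine ⟨j', by rw [hj]; exact hj', ?_⟩
      rw [hj, ← hMb]
      exact hlt
    · push_neg at hπb
      have hM1b : M1 b = M b := hel.2.2 b (fun j hh => hπb j hh.symm)
      apply ih M1 Ma N N' L' b hM1st hMa (by rw [hM1b, hMb]) hchain h'
      intro τ hτ hτb
      obtain ⟨j', hj', hle⟩ := hτb
      exact hsub τ (List.mem_cons_of_mem π hτ) ⟨j', hj', by rwa [← hM1b]⟩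

end MetaRotLemmas

/-- In the meta-rotation poset (elements `κ`, each a set of rotations, with bottom
element `sS` containing the source and top element `tT` containing the sink, whose
closed subsets containing `sS` and not `tT` generate exactly the maximum weight stable
matchings): (a) if `P ⊆ P'` are such closed subsets then the matching generated by `P`
dominates the one generated by `P'`; (b) the closed subset `{sS}` generates the
boy-optimal matching of the sublattice of maximum weight stable matchings; and (c) the
closed subset of all meta-rotations except `tT` generates its girl-optimal matching. -/
theorem meta_rotation_traversal {B G ι κ : Type*} [Fintype B] [Fintype G]
    [DecidableEq B] [DecidableEq G]
    (rB : B → G → ℕ) (rG : G → B → ℕ)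
    (hrB : ∀ b, Function.Injective (rB b)) (hrG : ∀ g, Function.Injective (rG g))
    (wt : B → G → ℚ)
    (rot : ι → Rotation B G) (hrot : ∀ i, IsRotation rB rG (rot i))
    (M₀ : B ≃ G) (hM₀ : BoyOptimal rB rG M₀)
    (metaOf : κ → Set ι) (MetaPrec : κ → κ → Prop) (sS tT : κ) (hst : sS ≠ tT)
    (hbot : ∀ k, MetaPrec k sS → k = sS) (htop : ∀ k, MetaPrec tT k → k = tT)
    (hchar : ∀ M : B ≃ G, MaxWtStable rB rG wt M ↔
      ∃ P : Set κ, MetaClosed MetaPrec P ∧ sS ∈ P ∧ tT ∉ P ∧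
        GeneratedBy rB rG M₀ rot (metaRotSet metaOf P) M)
    (hexists : ∀ P : Set κ, MetaClosed MetaPrec P → sS ∈ P → tT ∉ P →
      ∃ M : B ≃ G, GeneratedBy rB rG M₀ rot (metaRotSet metaOf P) M) :
    (∀ (P P' : Set κ) (MP MP' : B ≃ G),
        MetaClosed MetaPrec P → MetaClosed MetaPrec P' →
        sS ∈ P → tT ∉ P → sS ∈ P' → tT ∉ P' → P ⊆ P' →
        GeneratedBy rB rG M₀ rot (metaRotSet metaOf P) MP →
        GeneratedBy rB rG M₀ rot (metaRotSet metaOf P') MP' →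
        Dominates rB MP MP') ∧
    (∀ Mb : B ≃ G, GeneratedBy rB rG M₀ rot (metaRotSet metaOf {sS}) Mb →
        MaxWtStable rB rG wt Mb ∧
          ∀ N : B ≃ G, MaxWtStable rB rG wt N → Dominates rB Mb N) ∧
    (∀ Mg : B ≃ G, GeneratedBy rB rG M₀ rot (metaRotSet metaOf {k | k ≠ tT}) Mg →
        MaxWtStable rB rG wt Mg ∧
          ∀ N : B ≃ G, MaxWtStable rB rG wt N → Dominates rB N Mg) := by
  obtain ⟨hM₀st, _⟩ := hM₀
  have key : ∀ (P P' : Set κ) (MP MP' : B ≃ G), P ⊆ P' →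
      GeneratedBy rB rG M₀ rot (metaRotSet metaOf P) MP →
      GeneratedBy rB rG M₀ rot (metaRotSet metaOf P') MP' →
      Dominates rB MP MP' := by
    intro P P' MP MP' hss hg hg'
    obtain ⟨L, hmem, hchain⟩ := hg
    obtain ⟨L', hmem', hchain'⟩ := hg'
    intro b
    apply chain_mono hrB (L.map rot) M₀ M₀ MP MP' (L'.map rot) b hM₀st hM₀st rfl
      hchain hchain'
    intro τ hτ _
    obtain ⟨i, hiL, rfl⟩ := List.mem_map.mp hτ
    have : i ∈ metaRotSet metaOf P := (hmem i).mp hiL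
    obtain ⟨k, hk, hik⟩ := this
    have : i ∈ metaRotSet metaOf P' := ⟨k, hss hk, hik⟩
    exact List.mem_map.mpr ⟨i, (hmem' i).mpr this, rfl⟩
  have hclosedS : MetaClosed MetaPrec {sS} := by
    intro k hk k' hk'
    rw [Set.mem_singleton_iff] at hk
    subst hk
    exact Set.mem_singleton_iff.mpr (hbot k' hk')
  have hclosedT : MetaClosed MetaPrec {k | k ≠ tT} := by
    intro k hk k' hk'
    intro hc
    exact hk (htop k (hc ▸ hk'))
  refine ⟨fun P P' MP MP' _ _ _ _ _ _ hss hg hg' => key P P' MP MP' hss hg hg', ?_, ?_⟩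
  · intro Mb hgen
    have hMb : MaxWtStable rB rG wt Mb :=
      (hchar Mb).mpr ⟨{sS}, hclosedS, rfl, fun hc => hst (Set.mem_singleton_iff.mp hc).symm, hgen⟩
    refine ⟨hMb, fun N hN => ?_⟩
    obtain ⟨P, hP, hsP, htP, hgenN⟩ := (hchar N).mp hN
    exact key {sS} P Mb N (fun k hk => (Set.mem_singleton_iff.mp hk) ▸ hsP) hgen hgenN
  · intro Mg hgen
    have hMg : MaxWtStable rB rG wt Mg :=
      (hchar Mg).mpr ⟨{k | k ≠ tT}, hclosedT, hst, fun hc => hc rfl, hgen⟩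
    refine ⟨hMg, fun N hN => ?_⟩
    obtain ⟨P, hP, hsP, htP, hgenN⟩ := (hchar N).mp hN
    exact key P {k | k ≠ tT} N Mg (fun k hk hc => htP (hc ▸ hk)) hgenN hgen
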